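/- arXiv:2501.06966 — 3 statements merged into one kernel-verified Lean document; each statement's English description precedes it below -/
import Mathlib

section
/- The Cantor-like encoding has a gap around its threshold: for every binary sequence s : ℕ → {0,1}, if s_0 = 1 then 8·C⁺(s) − 3 ≥ 1, and if s_0 = 0 then 8·C⁺(s) − 3 ≤ −1. Consequently ρ(8·C⁺(s) − 3) = 2·s_0 − 1, where ρ is the saturable nonlinearity. -/
/-- A real number is a bit: `0` or `1`. -/
def IsBit (x : ℝ) : Prop := x = 0 ∨ x = 1

/-- Cantor-like base-4 encoding of the right half-tape `s₀ s₁ s₂ …`. -/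
noncomputable def Cp (s : ℕ → ℝ) : ℝ :=
  ∑' k : ℕ, (-1 : ℝ) ^ k * (2 * s k + 1) / 4 ^ (k + 1)


lemma abs_term_le (a : ℝ) (h1 : 0 ≤ a) (h2 : a ≤ 1) (k : ℕ) :
    |a * (-1/4 : ℝ) ^ (k + 1) / 4| ≤ (1/4 : ℝ) ^ (k + 2) := by
  have habs : |a * (-1/4 : ℝ) ^ (k + 1) / 4| = a * (1/4 : ℝ) ^ (k + 1) / 4 := by
    rw [abs_div, abs_mul, abs_pow]
    have h4 : |(-1/4 : ℝ)| = 1/4 := by norm_num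
    rw [h4, abs_of_nonneg h1, abs_of_nonneg (by norm_num : (0:ℝ) ≤ (4:ℝ))]
  rw [habs, show (1/4 : ℝ) ^ (k + 2) = (1/4 : ℝ) ^ (k + 1) / 4 by rw [pow_succ]; ring]
  have hp : (0:ℝ) ≤ (1/4 : ℝ) ^ (k + 1) := by positivity
  have : a * (1/4 : ℝ) ^ (k + 1) ≤ (1/4 : ℝ) ^ (k + 1) := by nlinarith
  linarith

theorem Cp_gap_and_threshold
    (ρ : ℝ → ℝ)
    (hodd : ∀ x : ℝ, ρ (-x) = -ρ x)
    (hsat : ∀ x : ℝ, 1 ≤ x → ρ x = 1)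
    (hlin : ∀ x : ℝ, 0 ≤ x → x ≤ 3 / 4 → ρ x = x)
    (s : ℕ → ℝ) (hs : ∀ k, IsBit (s k)) :
    (s 0 = 1 → 1 ≤ 8 * Cp s - 3) ∧
    (s 0 = 0 → 8 * Cp s - 3 ≤ -1) ∧
    ρ (8 * Cp s - 3) = 2 * s 0 - 1 := by
  have hb : ∀ k, 0 ≤ s k ∧ s k ≤ 1 := by
    intro k; rcases hs k with h | h <;> simp [h]
  set g : ℕ → ℝ := fun k => s k * (-1/4 : ℝ) ^ k / 4 with hg
  have hq : ‖(-1/4 : ℝ)‖ < 1 := by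
    rw [Real.norm_eq_abs, abs_lt]; constructor <;> norm_num
  have hq' : ‖(1/4 : ℝ)‖ < 1 := by
    rw [Real.norm_eq_abs, abs_lt]; constructor <;> norm_num
  have hgeom : Summable (fun k : ℕ => ((-1:ℝ)/4) ^ k) :=
    summable_geometric_of_norm_lt_one hq
  have hgeom' : Summable (fun k : ℕ => ((1:ℝ)/4) ^ k) :=
    summable_geometric_of_norm_lt_one hq'
  have hgsum : Summable g := by
    apply Summable.of_norm_bounded hgeom'
    intro k
    have h1 := (hb k).1
    have h2 := (hb k).2
    have : ‖g k‖ = s k * (1/4 : ℝ) ^ k / 4 := by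
      rw [hg]
      simp only [norm_div, norm_mul, norm_pow, Real.norm_eq_abs]
      rw [abs_of_nonneg h1]
      norm_num
    rw [this]
    have hp : (0:ℝ) ≤ (1/4 : ℝ) ^ k := by positivity
    nlinarith [pow_pos (by norm_num : (0:ℝ) < 1/4) k]
  -- Cp s = 1/5 + 2 * tsum g
  have hsplit : Cp s = 1/5 + 2 * ∑' k, g k := by
    have hf : ∀ k : ℕ, (-1 : ℝ) ^ k * (2 * s k + 1) / 4 ^ (k + 1)
        = ((-1:ℝ)/4) ^ k / 4 + 2 * g k := by
      intro k
      rw [hg]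
      simp only [div_pow, neg_div]
      field_simp
      have key : (-1/4:ℝ)^k * 4^k = (-1)^k := by rw [← mul_pow]; norm_num
      linear_combination (-(8 * s k + 4)) * key
    rw [Cp]
    simp_rw [hf]
    rw [Summable.tsum_add (hgeom.div_const 4) (hgsum.mul_left 2)]
    rw [tsum_div_const, tsum_mul_left, tsum_geometric_of_norm_lt_one hq]
    norm_num
  -- split off the first term of tsum g
  have hR : ∑' k, g k = s 0 / 4 + ∑' k, g (k + 1) := by
    rw [Summable.tsum_eq_zero_add hgsum]
    simp [hg]
  have htail : Summable (fun k => g (k + 1)) := hgsum.comp_injective (add_left_injective 1)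
  -- lower bound on the tail
  have hlow : -(1/12 : ℝ) ≤ ∑' k, g (k + 1) := by
    have hls : Summable (fun k : ℕ => -(((1:ℝ)/4) ^ (k + 2))) := by
      simpa using (((hgeom'.mul_left ((1:ℝ)/16)).neg).congr (by
        intro k; simp [pow_add]; ring))
    have hle : ∀ k : ℕ, -(((1:ℝ)/4) ^ (k + 2)) ≤ g (k + 1) := by
      intro k
      have h1 := (hb (k + 1)).1
      have h2 := (hb (k + 1)).2
      rw [hg]
      have habs := abs_term_le (s (k+1)) h1 h2 k
      nlinarith [neg_abs_le (s (k+1) * (-1/4 : ℝ) ^ (k+1) / 4)]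
    calc -(1/12 : ℝ) = ∑' k : ℕ, -(((1:ℝ)/4) ^ (k + 2)) := by
          rw [tsum_neg]
          have : (fun k : ℕ => ((1:ℝ)/4) ^ (k + 2)) = fun k => (1/16 : ℝ) * ((1:ℝ)/4)^k := by
            funext k; rw [pow_add]; ring
          rw [this, tsum_mul_left, tsum_geometric_of_norm_lt_one hq']
          norm_num
      _ ≤ ∑' k, g (k + 1) := Summable.tsum_le_tsum hle hls htail
  -- upper bound on the tail
  have hup : ∑' k, g (k + 1) ≤ 1/48 := by
    set h : ℕ → ℝ := fun k => if k = 0 then 0 else ((1:ℝ)/4) ^ (k + 2) with hh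
    have hhs : Summable h := by
      apply Summable.of_norm_bounded hgeom'
      intro k
      rw [hh]
      by_cases hk : k = 0
      · simp [hk]
      · simp only [hk, if_false]
        rw [Real.norm_eq_abs, abs_of_nonneg (by positivity : (0:ℝ) ≤ ((1:ℝ)/4)^(k+2))]
        apply pow_le_pow_of_le_one (by norm_num) (by norm_num)
        omega
    have hle : ∀ k : ℕ, g (k + 1) ≤ h k := by
      intro k
      have h1 := (hb (k + 1)).1
      have h2 := (hb (k + 1)).2
      rw [hg, hh]
      by_cases hk : k = 0
      · subst hk
        simp only [if_true]
        have : s 1 * (-1/4 : ℝ) ^ 1 / 4 = -(s 1 / 16) := by ring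
        rw [this]
        simp at h1 ⊢
        linarith [(hb 1).1]
      · simp only [hk, if_false]
        have habs := abs_term_le (s (k+1)) h1 h2 k
        nlinarith [le_abs_self (s (k+1) * (-1/4 : ℝ) ^ (k+1) / 4)]
    have hhsum : ∑' k, h k = 1/48 := by
      rw [Summable.tsum_eq_zero_add hhs]
      have h0 : h 0 = 0 := by simp [hh]
      have hrest : (fun k : ℕ => h (k + 1)) = fun k => (1/64 : ℝ) * ((1:ℝ)/4)^k := by
        funext k
        rw [hh]
        simp only [Nat.succ_ne_zero, if_false]
        rw [show k + 1 + 2 = k + 3 by ring, pow_add]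
        ring
      rw [h0, hrest, tsum_mul_left, tsum_geometric_of_norm_lt_one hq']
      norm_num
    calc ∑' k, g (k + 1) ≤ ∑' k, h k := Summable.tsum_le_tsum hle htail hhs
      _ = 1/48 := hhsum
  -- assemble
  have hCp : Cp s = 1/5 + 2 * (s 0 / 4 + ∑' k, g (k + 1)) := by rw [hsplit, hR]
  have key1 : s 0 = 1 → 1 ≤ 8 * Cp s - 3 := by
    intro h0
    rw [hCp, h0]
    linarith
  have key2 : s 0 = 0 → 8 * Cp s - 3 ≤ -1 := by
    intro h0
    rw [hCp, h0]
    linarith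
  refine ⟨key1, key2, ?_⟩
  rcases hs 0 with h0 | h0
  · have hle := key2 h0
    have : ρ (8 * Cp s - 3) = -ρ (-(8 * Cp s - 3)) := by
      rw [← hodd]; ring_nf
    rw [this, hsat _ (by linarith), h0]
    norm_num
  · rw [hsat _ (key1 h0), h0]
    norm_num
end

section
/- The Cantor-like encoding C⁺ is injective: if s, s' : ℕ → {0,1} and C⁺(s) = C⁺(s'), then s = s'. -/
lemma summable_geom_comb (a b : ℝ) :
    Summable (fun k : ℕ => (a * (-1:ℝ)^k + b) / 4 ^ (k+1)) := by
  have h : (fun k : ℕ => (a * (-1:ℝ)^k + b) / 4 ^ (k+1))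
      = fun k => (a/4) * (-1/4:ℝ)^k + (b/4) * (1/4:ℝ)^k := by
    funext k
    rw [div_pow, div_pow, pow_succ]
    ring
  rw [h]
  exact ((summable_geometric_of_norm_lt_one (by norm_num : ‖(-1/4:ℝ)‖ < 1)).mul_left _).add
    ((summable_geometric_of_norm_lt_one (by norm_num : ‖(1/4:ℝ)‖ < 1)).mul_left _)

lemma tsum_geom_comb (a b : ℝ) :
    ∑' k : ℕ, (a * (-1:ℝ)^k + b) / 4 ^ (k+1) = a/5 + b/3 := by
  have h : (fun k : ℕ => (a * (-1:ℝ)^k + b) / 4 ^ (k+1))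
      = fun k => (a/4) * (-1/4:ℝ)^k + (b/4) * (1/4:ℝ)^k := by
    funext k
    rw [div_pow, div_pow, pow_succ]
    ring
  rw [h, Summable.tsum_add (((summable_geometric_of_norm_lt_one
      (by norm_num : ‖(-1/4:ℝ)‖ < 1))).mul_left _)
      (((summable_geometric_of_norm_lt_one (by norm_num : ‖(1/4:ℝ)‖ < 1))).mul_left _),
    tsum_mul_left, tsum_mul_left,
    tsum_geometric_of_norm_lt_one (by norm_num : ‖(-1/4:ℝ)‖ < 1),
    tsum_geometric_of_norm_lt_one (by norm_num : ‖(1/4:ℝ)‖ < 1)]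
  norm_num
  ring

lemma bit_bounds {x : ℝ} (hx : IsBit x) : 0 ≤ x ∧ x ≤ 1 := by
  rcases hx with h | h <;> simp [h]

lemma summable_cp (s : ℕ → ℝ) (hs : ∀ k, IsBit (s k)) :
    Summable (fun k => (-1:ℝ)^k * (2 * s k + 1) / 4 ^ (k+1)) := by
  apply Summable.of_norm_bounded (g := fun k : ℕ => (0 * (-1:ℝ)^k + 3) / 4 ^ (k+1))
    (summable_geom_comb 0 3)
  intro k
  obtain ⟨h0, h1⟩ := bit_bounds (hs k)
  have h4 : (0:ℝ) < 4 ^ (k+1) := by positivity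
  rw [Real.norm_eq_abs, abs_div, abs_mul, abs_pow, abs_neg, abs_one, one_pow, one_mul,
    abs_of_pos h4, abs_of_nonneg (by linarith)]
  rw [div_le_div_iff_of_pos_right h4]
  nlinarith

lemma sign_cases (k : ℕ) : ((-1:ℝ))^k = 1 ∨ ((-1:ℝ))^k = -1 := by
  rcases Nat.even_or_odd k with h | h
  · exact Or.inl (Even.neg_one_pow h)
  · exact Or.inr (Odd.neg_one_pow h)

lemma cp_lower (s : ℕ → ℝ) (hs : ∀ k, IsBit (s k)) : 1/15 ≤ Cp s := by
  have ht := tsum_geom_comb 2 (-1)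
  have hle : ∀ k : ℕ, (2 * (-1:ℝ)^k + (-1)) / 4 ^ (k+1)
      ≤ (-1:ℝ)^k * (2 * s k + 1) / 4 ^ (k+1) := by
    intro k
    obtain ⟨h0, h1⟩ := bit_bounds (hs k)
    have h4 : (0:ℝ) < 4 ^ (k+1) := by positivity
    rw [div_le_div_iff_of_pos_right h4]
    rcases sign_cases k with h | h <;> rw [h] <;> nlinarith
  have := Summable.tsum_le_tsum hle (summable_geom_comb 2 (-1)) (summable_cp s hs)
  rw [ht] at this
  unfold Cp
  linarith

lemma cp_upper (s : ℕ → ℝ) (hs : ∀ k, IsBit (s k)) : Cp s ≤ 11/15 := by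
  have ht := tsum_geom_comb 2 1
  have hle : ∀ k : ℕ, (-1:ℝ)^k * (2 * s k + 1) / 4 ^ (k+1)
      ≤ (2 * (-1:ℝ)^k + 1) / 4 ^ (k+1) := by
    intro k
    obtain ⟨h0, h1⟩ := bit_bounds (hs k)
    have h4 : (0:ℝ) < 4 ^ (k+1) := by positivity
    rw [div_le_div_iff_of_pos_right h4]
    rcases sign_cases k with h | h <;> rw [h] <;> nlinarith
  have := Summable.tsum_le_tsum hle (summable_cp s hs) (summable_geom_comb 2 1)
  rw [ht] at this
  unfold Cp
  linarith

lemma cp_shift (s : ℕ → ℝ) (hs : ∀ k, IsBit (s k)) :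
    Cp s = (2 * s 0 + 1) / 4 - Cp (fun k => s (k+1)) / 4 := by
  have hsum := summable_cp s hs
  have h0 := Summable.tsum_eq_zero_add hsum
  have hshift : (fun k : ℕ => (-1:ℝ)^(k+1) * (2 * s (k+1) + 1) / 4 ^ (k+1+1))
      = fun k : ℕ => (-1/4) * ((-1:ℝ)^k * (2 * s (k+1) + 1) / 4 ^ (k+1)) := by
    funext k
    rw [pow_succ, pow_succ]
    ring
  unfold Cp
  rw [h0, hshift, tsum_mul_left]
  norm_num
  ring

lemma cp_zero_eq (s s' : ℕ → ℝ) (hs : ∀ k, IsBit (s k)) (hs' : ∀ k, IsBit (s' k))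
    (h : Cp s = Cp s') : s 0 = s' 0 := by
  have key : ∀ t t' : ℕ → ℝ, (∀ k, IsBit (t k)) → (∀ k, IsBit (t' k)) →
      Cp t = Cp t' → t 0 = 0 → t' 0 = 1 → False := by
    intro t t' ht ht' heq h0 h1
    have e1 := cp_shift t ht
    have e2 := cp_shift t' ht'
    have b1 := cp_lower (fun k => t (k+1)) (fun k => ht (k+1))
    have b2 := cp_upper (fun k => t' (k+1)) (fun k => ht' (k+1))
    rw [h0] at e1
    rw [h1] at e2
    linarith [heq]
  rcases hs 0 with h0 | h0 <;> rcases hs' 0 with h1 | h1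
  · rw [h0, h1]
  · exact (key s s' hs hs' h h0 h1).elim
  · exact (key s' s hs' hs h.symm h1 h0).elim
  · rw [h0, h1]

lemma cp_ext (n : ℕ) : ∀ (s s' : ℕ → ℝ), (∀ k, IsBit (s k)) → (∀ k, IsBit (s' k)) →
    Cp s = Cp s' → s n = s' n := by
  induction n with
  | zero => exact fun s s' hs hs' h => cp_zero_eq s s' hs hs' h
  | succ n ih =>
    intro s s' hs hs' h
    have h0 := cp_zero_eq s s' hs hs' h
    have e1 := cp_shift s hs
    have e2 := cp_shift s' hs'
    have hsh : Cp (fun k => s (k+1)) = Cp (fun k => s' (k+1)) := by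
      rw [h0] at e1
      rw [e1, e2] at h
      linarith
    exact ih (fun k => s (k+1)) (fun k => s' (k+1)) (fun k => hs (k+1)) (fun k => hs' (k+1)) hsh

theorem Cp_injective (s s' : ℕ → ℝ) (hs : ∀ k, IsBit (s k)) (hs' : ∀ k, IsBit (s' k))
    (h : Cp s = Cp s') : s = s' := by
  funext n
  exact cp_ext n s s' hs hs' h
end

section
/- The symbol-reading step is exact: for any binary sequence s : ℕ → {0,1} with r = C⁺(s), the three-step iteration a ↦ ρ(a + 8r − 3), then a ↦ ρ(a), then a ↦ ρ(a) − a/2 + 1/2 starting from a = 0 terminates with a = s_0. -/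
section aux

private lemma bit_bounds_s16 (s : ℕ → ℝ) (hs : ∀ k, IsBit (s k)) (k : ℕ) : 0 ≤ s k ∧ s k ≤ 1 := by
  rcases hs k with h | h <;> rw [h] <;> norm_num

private lemma abs_f_le (s : ℕ → ℝ) (hs : ∀ k, IsBit (s k)) (k : ℕ) :
    |(-1 : ℝ) ^ k * (2 * s k + 1) / 4 ^ (k + 1)| ≤ (3 / 4) * (1 / 4) ^ k := by
  obtain ⟨h0, h1⟩ := bit_bounds_s16 s hs k
  rw [abs_div, abs_mul, abs_pow, abs_neg, abs_one, one_pow, one_mul]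
  rw [abs_of_nonneg (by linarith : (0:ℝ) ≤ 2 * s k + 1),
    abs_of_nonneg (by positivity : (0:ℝ) ≤ (4:ℝ) ^ (k+1))]
  rw [div_le_iff₀ (by positivity)]
  have h1 : ((1:ℝ)/4) ^ k * 4 ^ k = 1 := by rw [← mul_pow]; norm_num
  have h2 : (3 / 4 : ℝ) * (1 / 4) ^ k * 4 ^ (k + 1) = 3 := by
    rw [pow_succ]; linear_combination (3:ℝ) * h1
  rw [h2]; linarith

private lemma summable_f (s : ℕ → ℝ) (hs : ∀ k, IsBit (s k)) :
    Summable (fun k => (-1 : ℝ) ^ k * (2 * s k + 1) / 4 ^ (k + 1)) := by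
  apply Summable.of_abs
  apply Summable.of_nonneg_of_le (fun k => abs_nonneg _) (abs_f_le s hs)
  exact (summable_geometric_of_lt_one (by norm_num) (by norm_num)).mul_left _

end aux

theorem symbol_reading_exact
    (ρ : ℝ → ℝ)
    (hodd : ∀ x : ℝ, ρ (-x) = -ρ x)
    (hsat : ∀ x : ℝ, 1 ≤ x → ρ x = 1)
    (hlin : ∀ x : ℝ, 0 ≤ x → x ≤ 3 / 4 → ρ x = x)
    (s : ℕ → ℝ) (hs : ∀ k, IsBit (s k)) :
    let r := Cp s
    let a₁ := ρ (0 + 8 * r - 3)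
    let a₂ := ρ a₁
    let a₃ := ρ a₂ - a₂ / 2 + 1 / 2
    a₃ = s 0 := by
  intro r a₁ a₂ a₃
  set f : ℕ → ℝ := fun k => (-1 : ℝ) ^ k * (2 * s k + 1) / 4 ^ (k + 1) with hf
  have hsum : Summable f := summable_f s hs
  have hsumtail : Summable (fun k => f (k + 1)) := (summable_nat_add_iff 1).mpr hsum
  set T : ℝ := ∑' k, f (k + 1) with hT
  have hsplit : r = f 0 + T := by
    show Cp s = f 0 + T
    exact hsum.tsum_eq_zero_add
  have hgeom : ∑' k : ℕ, (1 / 4 : ℝ) ^ k = 4 / 3 := by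
    rw [tsum_geometric_of_lt_one (by norm_num) (by norm_num)]; norm_num
  -- lower bound T ≥ -1/4
  have hTlb : -(1/4 : ℝ) ≤ T := by
    have hb : Summable (fun k : ℕ => -((3/16 : ℝ) * (1/4)^k)) :=
      ((summable_geometric_of_lt_one (by norm_num) (by norm_num)).mul_left _).neg
    have hle : ∀ k : ℕ, -((3/16 : ℝ) * (1/4)^k) ≤ f (k + 1) := by
      intro k
      have h1 := abs_f_le s hs (k + 1)
      have h2 : -|f (k+1)| ≤ f (k+1) := neg_abs_le _
      have h3 : (3/4 : ℝ) * (1/4)^(k+1) = (3/16) * (1/4)^k := by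
        rw [pow_succ]; ring
      rw [hf] at h2 ⊢
      simp only at h1 h2 ⊢
      linarith [h1, h2, h3 ▸ h1]
    have := Summable.tsum_le_tsum hle hb hsumtail
    have hval : ∑' k : ℕ, -((3/16 : ℝ) * (1/4)^k) = -(1/4) := by
      rw [tsum_neg, tsum_mul_left, hgeom]; norm_num
    rw [hval] at this; exact this
  -- upper bound T ≤ 0
  have hTub : T ≤ 0 := by
    have hg := hsumtail
    have he : Summable (fun k : ℕ => f (2 * k + 1)) :=
      hsum.comp_injective (by intro a b h; dsimp only at h; omega :
        Function.Injective (fun k : ℕ => 2 * k + 1))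
    have ho : Summable (fun k : ℕ => f (2 * k + 2)) :=
      hsum.comp_injective (by intro a b h; dsimp only at h; omega :
        Function.Injective (fun k : ℕ => 2 * k + 2))
    have hEAO : ∑' k : ℕ, f (2 * k + 1) + ∑' k : ℕ, f (2 * k + 2) = T := by
      have := tsum_even_add_odd (f := fun k => f (k + 1))
        (by simpa [mul_comm] using he) (by
          have : ∀ k : ℕ, f (2 * k + 1 + 1) = f (2 * k + 2) := fun k => rfl
          simpa [mul_comm, this] using ho)
      simpa [hT, mul_comm] using this
    have hpairs : ∑' k : ℕ, (f (2 * k + 1) + f (2 * k + 2)) ≤ 0 := by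
      apply tsum_nonpos
      intro k
      obtain ⟨a0, a1⟩ := bit_bounds_s16 s hs (2 * k + 1)
      obtain ⟨b0, b1⟩ := bit_bounds_s16 s hs (2 * k + 2)
      have hodd' : ((-1 : ℝ)) ^ (2 * k + 1) = -1 := by
        rw [pow_succ, pow_mul]; norm_num
      have heven : ((-1 : ℝ)) ^ (2 * k + 2) = 1 := by
        rw [pow_succ, pow_succ, pow_mul]; norm_num
      have e1 : (4:ℝ) ^ (2 * k + 1 + 1) = 4 ^ (2 * k) * 16 := by ring
      have e2 : (4:ℝ) ^ (2 * k + 2 + 1) = 4 ^ (2 * k) * 64 := by ring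
      show f (2 * k + 1) + f (2 * k + 2) ≤ 0
      rw [hf]
      simp only [hodd', heven, one_mul, e1, e2]
      have hP : (0:ℝ) < 4 ^ (2 * k) := by positivity
      have key : (-1:ℝ) * (2 * s (2*k+1) + 1) / (4^(2*k)*16)
            + (2 * s (2*k+2) + 1) / (4^(2*k)*64)
          = (2 * s (2*k+2) + 1 - 4 * (2 * s (2*k+1) + 1)) / (4^(2*k)*64) := by
        field_simp
        ring
      rw [key]
      exact div_nonpos_of_nonpos_of_nonneg (by linarith) (by positivity)
    rw [← hEAO, ← Summable.tsum_add he ho]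
    exact hpairs
  -- finish
  have hf0 : f 0 = s 0 / 2 + 1 / 4 := by rw [hf]; norm_num; ring
  rcases hs 0 with h0 | h0
  · -- s 0 = 0
    have hx : 0 + 8 * r - 3 ≤ -1 := by
      rw [hsplit, hf0, h0]; linarith
    have ha1 : a₁ = -1 := by
      show ρ (0 + 8 * r - 3) = -1
      have : ρ (0 + 8 * r - 3) = ρ (-(-(0 + 8 * r - 3))) := by ring_nf
      rw [this, hodd, hsat _ (by linarith)]
    have ha2 : a₂ = -1 := by
      show ρ a₁ = -1
      rw [ha1]
      have : ρ (-1 : ℝ) = -ρ 1 := hodd 1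
      rw [this, hsat 1 le_rfl]
    show ρ a₂ - a₂ / 2 + 1 / 2 = s 0
    rw [ha2, h0]
    have : ρ (-1 : ℝ) = -ρ 1 := hodd 1
    rw [this, hsat 1 le_rfl]; norm_num
  · -- s 0 = 1
    have hx : 1 ≤ 0 + 8 * r - 3 := by
      rw [hsplit, hf0, h0]; linarith
    have ha1 : a₁ = 1 := hsat _ hx
    have ha2 : a₂ = 1 := by show ρ a₁ = 1; rw [ha1]; exact hsat 1 le_rfl
    show ρ a₂ - a₂ / 2 + 1 / 2 = s 0
    rw [ha2, hsat 1 le_rfl, h0]; norm_num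
end
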